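/- Let S be a real symmetric positive definite p×p matrix, let P be a nonempty finite set of vectors in ℝ^p, let ρ ≥ 1, and let v′ ∈ P satisfy (v′)ᵀ S⁻¹ v′ ≥ (1/ρ)·max_{v∈P} vᵀ S⁻¹ v. Then det(S + v′(v′)ᵀ) ≥ (1/ρ)·max_{v∈P} det(S + v vᵀ). -/

import Mathlib

open Matrix BigOperators

lemma det_add_vecMulVec_self (p : ℕ) (S : Matrix (Fin p) (Fin p) ℝ) (hS : S.PosDef)
    (v : Fin p → ℝ) :
    (S + vecMulVec v v).det = S.det * (1 + v ⬝ᵥ S⁻¹ *ᵥ v) := by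
  have hsym : ∀ i j, S⁻¹ i j = S⁻¹ j i := fun i j => by
    have := hS.1.inv.eq
    conv_lhs => rw [← this]
    simp [conjTranspose_apply]
  rw [vecMulVec_eq (Fin 1), det_add_replicateCol_mul_replicateRow hS.det_pos.ne'.isUnit]
  congr 1
  simp [det_fin_one, Matrix.mul_apply, row, col, mulVec, dotProduct, Finset.mul_sum,
    mul_comm, mul_left_comm]
  rw [Finset.sum_comm]
  congr 1; ext i; congr 1; ext j; rw [hsym i j]; ring

/-- Lemma 1 of the paper: an approximate maximizer of the quadratic form v ↦ vᵀS⁻¹v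
is an approximate maximizer of the rank-one determinant update v ↦ det(S + vvᵀ). -/
theorem approx_quadratic_gives_approx_det
    (p : ℕ) (S : Matrix (Fin p) (Fin p) ℝ) (hS : S.PosDef)
    (P : Finset (Fin p → ℝ)) (hP : P.Nonempty) (ρ : ℝ) (hρ : 1 ≤ ρ)
    (v' : Fin p → ℝ) (hv' : v' ∈ P)
    (happrox : v' ⬝ᵥ S⁻¹ *ᵥ v' ≥ (1 / ρ) * P.sup' hP (fun v => v ⬝ᵥ S⁻¹ *ᵥ v)) :
    (S + vecMulVec v' v').det ≥
      (1 / ρ) * P.sup' hP (fun v => (S + vecMulVec v v).det) := by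
  have hρ0 : (0 : ℝ) < ρ := lt_of_lt_of_le one_pos hρ
  have hdet : (0 : ℝ) < S.det := hS.det_pos
  -- ρ * q(v') ≥ sup q
  have hsup : P.sup' hP (fun v => v ⬝ᵥ S⁻¹ *ᵥ v) ≤ ρ * (v' ⬝ᵥ S⁻¹ *ᵥ v') := by
    have := mul_le_mul_of_nonneg_left happrox (le_of_lt hρ0)
    calc P.sup' hP (fun v => v ⬝ᵥ S⁻¹ *ᵥ v)
        = ρ * ((1/ρ) * P.sup' hP (fun v => v ⬝ᵥ S⁻¹ *ᵥ v)) := by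
          field_simp
      _ ≤ ρ * (v' ⬝ᵥ S⁻¹ *ᵥ v') := this
  rw [ge_iff_le, ← le_div_iff₀' (by positivity : (0:ℝ) < 1/ρ)]
  rw [div_div_eq_mul_div, div_one]
  apply Finset.sup'_le
  intro v hv
  have hq : v ⬝ᵥ S⁻¹ *ᵥ v ≤ ρ * (v' ⬝ᵥ S⁻¹ *ᵥ v') :=
    le_trans (Finset.le_sup' (fun v => v ⬝ᵥ S⁻¹ *ᵥ v) hv) hsup
  rw [det_add_vecMulVec_self p S hS v, det_add_vecMulVec_self p S hS v']
  calc S.det * (1 + v ⬝ᵥ S⁻¹ *ᵥ v)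
      ≤ S.det * (ρ + ρ * (v' ⬝ᵥ S⁻¹ *ᵥ v')) := by
        apply mul_le_mul_of_nonneg_left _ hdet.le
        exact add_le_add hρ hq
    _ = S.det * (1 + v' ⬝ᵥ S⁻¹ *ᵥ v') * ρ := by ring
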